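/- Let R₀ ≥ 1 and let v : ℝ² → ℝ be twice continuously differentiable on {x : |x| ≥ R₀} with v(x) → 0 as |x| → ∞. Suppose there is C₁ > 0 such that for every R ≥ R₀, sup_{|x| ≥ R} |Δv(x) − v(x)| ≤ C₁ (sup_{|x| ≥ R} |v(x)|)². Then for every ε ∈ (0,1) there exists C > 0 such that |v(x)| ≤ C e^{−(1−ε)|x|} for all |x| ≥ R₀. -/

import Mathlib

open MeasureTheory Filter
open scoped RealInnerProductSpace

/-- The Euclidean Laplacian on `ℝ²`: the sum of the two pure second partial derivatives. -/
noncomputable def lap2 (f : EuclideanSpace ℝ (Fin 2) → ℝ) (x : EuclideanSpace ℝ (Fin 2)) : ℝ :=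
  ∑ i : Fin 2, iteratedFDeriv ℝ 2 f x ![EuclideanSpace.single i 1, EuclideanSpace.single i 1]


lemma ev_diff {g : ℝ → ℝ} {a : ℝ} (h : ContDiffAt ℝ 2 g a) :
    ∀ᶠ t in nhds a, DifferentiableAt ℝ g t :=
  (h.eventually (by simp)).mono fun t ht => ht.differentiableAt (by norm_num)

lemma deriv_diffAt {g : ℝ → ℝ} {a : ℝ} (h : ContDiffAt ℝ 2 g a) :
    DifferentiableAt ℝ (deriv g) a := by
  have h1 : ContDiffAt ℝ 1 (fderiv ℝ g) a := h.fderiv_right (by norm_num)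
  have h2 : DifferentiableAt ℝ (fun t => fderiv ℝ g t 1) a :=
    (h1.differentiableAt (by norm_num)).clm_apply (differentiableAt_const _)
  have : (fun t => fderiv ℝ g t 1) = deriv g := funext fun t => fderiv_apply_one_eq_deriv
  rwa [this] at h2

lemma second_deriv_test {g : ℝ → ℝ} (h : ContDiffAt ℝ 2 g 0) (hm : IsLocalMax g 0) :
    deriv (deriv g) 0 ≤ 0 := by
  by_contra hc
  push_neg at hc
  have h0 : deriv g 0 = 0 := hm.deriv_eq_zero
  have hd : HasDerivAt (deriv g) (deriv (deriv g) 0) 0 := (deriv_diffAt h).hasDerivAt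
  have hslope := hasDerivAt_iff_tendsto_slope.1 hd
  have hev0 : ∀ᶠ t in nhdsWithin (0:ℝ) {(0:ℝ)}ᶜ, 0 < slope (deriv g) 0 t :=
    hslope.eventually (eventually_gt_nhds hc)
  have hev : ∀ᶠ t in nhds (0:ℝ), (0 < t → 0 < deriv g t) := by
    rw [eventually_nhdsWithin_iff] at hev0
    refine hev0.mono fun t ht hpos => ?_
    have hs := ht (by simp [ne_of_gt hpos])
    have : slope (deriv g) 0 t = deriv g t / t := by
      simp [slope_def_field, h0]
    rw [this] at hs
    have := mul_pos hs hpos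
    rwa [div_mul_cancel₀ _ (ne_of_gt hpos)] at this
  have hall : ∀ᶠ t in nhds (0:ℝ),
      (DifferentiableAt ℝ g t ∧ (0 < t → 0 < deriv g t)) ∧ g t ≤ g 0 :=
    ((ev_diff h).and hev).and hm
  rw [Metric.eventually_nhds_iff] at hall
  obtain ⟨δ, hδ, hδall⟩ := hall
  set b := δ/2 with hb
  have hbδ : ∀ t ∈ Set.Icc (0:ℝ) b, dist t 0 < δ := by
    intro t ht
    rw [Real.dist_eq, sub_zero, abs_of_nonneg ht.1]
    calc t ≤ b := ht.2
    _ < δ := by simp [hb]; linarith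
  have hmono : StrictMonoOn g (Set.Icc (0:ℝ) b) := by
    apply strictMonoOn_of_deriv_pos (convex_Icc _ _)
    · intro t ht
      exact ((hδall (hbδ t ht)).1.1).continuousAt.continuousWithinAt
    · intro t ht
      rw [interior_Icc] at ht
      exact (hδall (hbδ t ⟨le_of_lt ht.1, le_of_lt ht.2⟩)).1.2 ht.1
  have hb0 : (0:ℝ) < b := by simp [hb]; linarith
  have := hmono (Set.left_mem_Icc.2 (le_of_lt hb0)) (Set.right_mem_Icc.2 (le_of_lt hb0)) hb0
  have hle := (hδall (hbδ b (Set.right_mem_Icc.2 (le_of_lt hb0)))).2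
  linarith


section Slice
variable {E : Type*} [NormedAddCommGroup E] [InnerProductSpace ℝ E]

lemma line_hasDerivAt (x e : E) (t : ℝ) : HasDerivAt (fun s : ℝ => x + s • e) e t := by
  simpa using ((hasDerivAt_id t).smul_const e).const_add x

lemma slice_contDiffAt {f : E → ℝ} {x : E} (e : E) (h : ContDiffAt ℝ 2 f x) :
    ContDiffAt ℝ 2 (fun t : ℝ => f (x + t • e)) 0 := by
  have hline : ContDiff ℝ 2 (fun t : ℝ => x + t • e) :=
    contDiff_const.add (contDiff_id.smul contDiff_const)
  have h' : ContDiffAt ℝ 2 f ((fun t : ℝ => x + t • e) 0) := by simpa using h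
  exact ContDiffAt.comp 0 h' hline.contDiffAt

lemma slice_deriv2 {f : E → ℝ} {x : E} (e : E) (h : ContDiffAt ℝ 2 f x) :
    deriv (deriv (fun t : ℝ => f (x + t • e))) 0 = fderiv ℝ (fderiv ℝ f) x e e := by
  have hev : ∀ᶠ y in nhds x, DifferentiableAt ℝ f y :=
    (h.eventually (by simp)).mono fun y hy => hy.differentiableAt (by norm_num)
  have htend : Tendsto (fun t : ℝ => x + t • e) (nhds 0) (nhds x) := by
    have := (line_hasDerivAt x e 0).continuousAt
    simpa using this.tendsto
  have hd1 : ∀ᶠ t in nhds (0:ℝ),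
      HasDerivAt (fun s => f (x + s • e)) (fderiv ℝ f (x + t • e) e) t := by
    filter_upwards [htend.eventually hev] with t ht
    exact ht.hasFDerivAt.comp_hasDerivAt t (line_hasDerivAt x e t)
  have heq : deriv (fun s => f (x + s • e)) =ᶠ[nhds (0:ℝ)] fun t => fderiv ℝ f (x + t • e) e :=
    hd1.mono fun t ht => ht.deriv
  rw [heq.deriv_eq]
  have hf' : ContDiffAt ℝ 1 (fderiv ℝ f) x := h.fderiv_right (by norm_num)
  have h2 : HasFDerivAt (fderiv ℝ f) (fderiv ℝ (fderiv ℝ f) x) x :=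
    (hf'.differentiableAt (by norm_num)).hasFDerivAt
  have h2' : HasFDerivAt (fderiv ℝ f) (fderiv ℝ (fderiv ℝ f) x) ((fun t : ℝ => x + t • e) 0) := by
    simpa using h2
  have h3 : HasDerivAt (fun t : ℝ => fderiv ℝ f (x + t • e)) (fderiv ℝ (fderiv ℝ f) x e) 0 :=
    h2'.comp_hasDerivAt 0 (line_hasDerivAt x e 0)
  have h4 := h3.clm_apply (hasDerivAt_const (0:ℝ) e)
  simpa using h4.deriv

lemma deriv2_sub {F G : ℝ → ℝ}
    (hF : ContDiffAt ℝ 2 F 0) (hG : ContDiffAt ℝ 2 G 0)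
    (hFd : ∀ᶠ t in nhds (0:ℝ), DifferentiableAt ℝ F t)
    (hGd : ∀ᶠ t in nhds (0:ℝ), DifferentiableAt ℝ G t)
    (hF2 : DifferentiableAt ℝ (deriv F) 0) (hG2 : DifferentiableAt ℝ (deriv G) 0) :
    deriv (deriv (fun t => F t - G t)) 0 = deriv (deriv F) 0 - deriv (deriv G) 0 := by
  have heq : deriv (fun t => F t - G t) =ᶠ[nhds 0] fun t => deriv F t - deriv G t := by
    filter_upwards [hFd, hGd] with t h1 h2
    exact deriv_fun_sub h1 h2
  rw [heq.deriv_eq, deriv_fun_sub hF2 hG2]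

end Slice

lemma lap2_eq {f : EuclideanSpace ℝ (Fin 2) → ℝ} {x : EuclideanSpace ℝ (Fin 2)}
    (h : ContDiffAt ℝ 2 f x) :
    lap2 f x = ∑ i : Fin 2,
      deriv (deriv (fun t : ℝ => f (x + t • EuclideanSpace.single i 1))) 0 := by
  unfold lap2
  refine Finset.sum_congr rfl fun i _ => ?_
  rw [iteratedFDeriv_two_apply, slice_deriv2 _ h]
  simp


section Barrier
variable {E : Type*} [NormedAddCommGroup E] [InnerProductSpace ℝ E]

lemma norm_line_eq (y e : E) (he : ‖e‖ = 1) (t : ℝ) :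
    ‖y + t • e‖ = Real.sqrt (‖y‖^2 + 2 * ⟪y, e⟫ * t + t^2) := by
  rw [← Real.sqrt_sq (norm_nonneg (y + t • e)), norm_add_sq_real]
  congr 1
  rw [real_inner_smul_right, norm_smul, he]
  simp [mul_pow]
  ring

lemma poly_hasDerivAt (r c t : ℝ) :
    HasDerivAt (fun s : ℝ => r^2 + 2 * c * s + s^2) (2 * c + 2 * t) t := by
  have h1 : HasDerivAt (fun s : ℝ => 2 * c * s) (2 * c) t := by
    simpa using (hasDerivAt_id t).const_mul (2 * c)
  have h2 : HasDerivAt (fun s : ℝ => s ^ 2) (2 * t) t := by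
    simpa using hasDerivAt_pow 2 t
  have h3 := (h1.add h2).const_add (r^2)
  have hfn : (fun s : ℝ => r^2 + (2 * c * s + s^2)) = fun s : ℝ => r^2 + 2 * c * s + s^2 := by
    funext s; ring
  have h3' : HasDerivAt (fun s : ℝ => r^2 + (2 * c * s + s^2)) (2 * c + 2 * t) t := h3
  rwa [hfn] at h3'

lemma barrier_hasDerivAt (A B lam : ℝ) (y e : E) (he : ‖e‖ = 1) {t : ℝ}
    (ht : y + t • e ≠ 0) :
    HasDerivAt (fun s : ℝ => A * Real.exp (-(lam * ‖y + s • e‖)) + B)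
      (A * (Real.exp (-(lam * ‖y + t • e‖)) *
        (-(lam * ((2 * ⟪y, e⟫ + 2 * t) / (2 * ‖y + t • e‖)))))) t := by
  have hfun : (fun s : ℝ => A * Real.exp (-(lam * ‖y + s • e‖)) + B)
      = fun s : ℝ => A * Real.exp (-(lam * Real.sqrt (‖y‖^2 + 2 * ⟪y, e⟫ * s + s^2))) + B := by
    funext s; rw [norm_line_eq y e he]
  have hpt : ‖y‖^2 + 2 * ⟪y, e⟫ * t + t^2 ≠ 0 := by
    have hn := norm_line_eq y e he t
    intro h0
    rw [h0] at hn
    simp at hn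
    exact ht hn
  have key := (((((poly_hasDerivAt (‖y‖) ⟪y, e⟫ t).sqrt hpt).const_mul lam).neg).exp).const_mul A
  have key2 := key.add_const B
  rw [hfun, norm_line_eq y e he]
  exact key2

lemma barrier_deriv2 (A B lam : ℝ) (y e : E) (he : ‖e‖ = 1) (hy : y ≠ 0) :
    deriv (deriv (fun t : ℝ => A * Real.exp (-(lam * ‖y + t • e‖)) + B)) 0
      = A * Real.exp (-(lam * ‖y‖)) *
        (lam^2 * ⟪y, e⟫^2 / ‖y‖^2 + lam * ⟪y, e⟫^2 / ‖y‖^3 - lam / ‖y‖) := by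
  set r := ‖y‖ with hr
  have hr0 : 0 < r := norm_pos_iff.mpr hy
  set c := ⟪y, e⟫ with hc
  have hne : ∀ᶠ t in nhds (0:ℝ), y + t • e ≠ 0 := by
    have hcont : Continuous fun t : ℝ => y + t • e := by continuity
    have h0 : (fun t : ℝ => y + t • e) 0 ≠ 0 := by simpa using hy
    exact hcont.continuousAt.eventually_ne h0
  set D1 : ℝ → ℝ := fun t => A * (Real.exp (-(lam * ‖y + t • e‖)) *
      (-(lam * ((2 * c + 2 * t) / (2 * ‖y + t • e‖))))) with hD1
  have heq : deriv (fun t : ℝ => A * Real.exp (-(lam * ‖y + t • e‖)) + B) =ᶠ[nhds (0:ℝ)] D1 := by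
    filter_upwards [hne] with t ht
    exact (barrier_hasDerivAt A B lam y e he ht).deriv
  rw [heq.deriv_eq]
  have hD1eq : D1 =ᶠ[nhds (0:ℝ)] fun t =>
      (A * Real.exp (-(lam * Real.sqrt (r^2 + 2*c*t + t^2)))) *
      (-(lam * ((2 * c + 2 * t) / (2 * Real.sqrt (r^2 + 2*c*t + t^2))))) := by
    refine Eventually.of_forall fun t => ?_
    simp only [hD1, norm_line_eq y e he]
    ring
  rw [hD1eq.deriv_eq]
  have hp00 : r^2 + 2 * c * 0 + 0^2 = r^2 := by ring
  have hpt0 : r^2 + 2 * c * 0 + 0^2 ≠ 0 := by rw [hp00]; positivity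
  have hs0 : Real.sqrt (r^2 + 2*c*0 + 0^2) = r := by rw [hp00]; exact Real.sqrt_sq hr0.le
  have hsqrt : HasDerivAt (fun s : ℝ => Real.sqrt (r^2 + 2 * c * s + s^2))
      ((2 * c + 2 * 0) / (2 * Real.sqrt (r^2 + 2*c*0 + 0^2))) 0 :=
    (poly_hasDerivAt r c 0).sqrt hpt0
  have hexp : HasDerivAt (fun s : ℝ => A * Real.exp (-(lam * Real.sqrt (r^2 + 2*c*s + s^2))))
      (A * (Real.exp (-(lam * Real.sqrt (r^2 + 2*c*0 + 0^2))) *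
        (-(lam * ((2 * c + 2 * 0) / (2 * Real.sqrt (r^2 + 2*c*0 + 0^2))))))) 0 :=
    (((hsqrt.const_mul lam).neg).exp).const_mul A
  have hnum : HasDerivAt (fun s : ℝ => 2 * c + 2 * s) 2 0 := by
    have h1 : HasDerivAt (fun s : ℝ => 2 * s) 2 0 := by
      simpa using (hasDerivAt_id (0:ℝ)).const_mul 2
    simpa using h1.const_add (2*c)
  have hden : HasDerivAt (fun s : ℝ => 2 * Real.sqrt (r^2 + 2*c*s + s^2))
      (2 * ((2 * c + 2 * 0) / (2 * Real.sqrt (r^2 + 2*c*0 + 0^2)))) 0 := hsqrt.const_mul 2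
  have hden0 : 2 * Real.sqrt (r^2 + 2*c*0 + 0^2) ≠ 0 := by rw [hs0]; positivity
  have hquot := hnum.div hden hden0
  have hneg := (hquot.const_mul lam).neg
  have hprod := hexp.mul hneg
  have hval : deriv (fun t => A * Real.exp (-(lam * Real.sqrt (r ^ 2 + 2 * c * t + t ^ 2))) *
      -(lam * ((2 * c + 2 * t) / (2 * Real.sqrt (r ^ 2 + 2 * c * t + t ^ 2))))) 0 = _ := hprod.deriv
  simp only [Pi.neg_apply, Pi.div_apply] at hval
  rw [hval, hs0]
  have hrne : r ≠ 0 := hr0.ne'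
  field_simp
  ring
end Barrier


abbrev E2 := EuclideanSpace ℝ (Fin 2)

lemma coord_sq_sum (y : E2) : ∑ i : Fin 2, (y i)^2 = ‖y‖^2 := by
  rw [EuclideanSpace.norm_eq]
  rw [Real.sq_sqrt (by positivity)]
  refine Finset.sum_congr rfl fun i _ => ?_
  rw [Real.norm_eq_abs, sq_abs]

lemma inner_single (y : E2) (i : Fin 2) : ⟪y, EuclideanSpace.single i (1:ℝ)⟫ = y i := by
  rw [EuclideanSpace.inner_single_right]
  simp

lemma barrier_sum (A' B lam : ℝ) (y : E2) (hy : y ≠ 0) :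
    ∑ i : Fin 2, deriv (deriv (fun t : ℝ =>
        A' * Real.exp (-(lam * ‖y + t • EuclideanSpace.single i (1:ℝ)‖)) + B)) 0
      = A' * Real.exp (-(lam * ‖y‖)) * (lam^2 - lam / ‖y‖) := by
  have hr0 : 0 < ‖y‖ := norm_pos_iff.mpr hy
  have hrw : ∀ i : Fin 2, deriv (deriv (fun t : ℝ =>
      A' * Real.exp (-(lam * ‖y + t • EuclideanSpace.single i (1:ℝ)‖)) + B)) 0
      = A' * Real.exp (-(lam * ‖y‖)) *
        (lam^2 * (y i)^2 / ‖y‖^2 + lam * (y i)^2 / ‖y‖^3 - lam / ‖y‖) := by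
    intro i
    rw [barrier_deriv2 A' B lam y _ (by simp) hy, inner_single]
  rw [Finset.sum_congr rfl fun i _ => hrw i]
  have hsum : ∑ i : Fin 2, (y i)^2 = ‖y‖^2 := coord_sq_sum y
  rw [Fin.sum_univ_two] at hsum ⊢
  have hrne : ‖y‖ ≠ 0 := hr0.ne'
  rw [show A' * Real.exp (-(lam * ‖y‖)) * (lam^2 * (y 0)^2 / ‖y‖^2 + lam * (y 0)^2 / ‖y‖^3 - lam / ‖y‖)
      + A' * Real.exp (-(lam * ‖y‖)) * (lam^2 * (y 1)^2 / ‖y‖^2 + lam * (y 1)^2 / ‖y‖^3 - lam / ‖y‖)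
      = A' * Real.exp (-(lam * ‖y‖)) * (lam^2 * ((y 0)^2 + (y 1)^2) / ‖y‖^2
          + lam * ((y 0)^2 + (y 1)^2) / ‖y‖^3 - 2*lam / ‖y‖) from by ring, hsum]
  field_simp
  ring

lemma maxprin (R₀ : ℝ) (hR₀ : 1 ≤ R₀) (f : E2 → ℝ)
    (hC2 : ContDiffOn ℝ 2 f {x | R₀ ≤ ‖x‖})
    (hlim : Tendsto f (comap (fun x : E2 => ‖x‖) atTop) (nhds 0))
    {R lam A B : ℝ} (hR : R₀ ≤ R) (hlam0 : 0 < lam) (hlam1 : lam < 1)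
    (hA : 0 < A) (hB : 0 < B)
    (hbound : ∀ x, R ≤ ‖x‖ → f x ≤ A)
    (hpde : ∀ x, R ≤ ‖x‖ → f x - B ≤ lap2 f x) :
    ∀ x, R ≤ ‖x‖ → f x ≤ A * Real.exp (lam * R) * Real.exp (-(lam * ‖x‖)) + B := by
  by_contra hcon
  push_neg at hcon
  obtain ⟨x₀, hx₀R, hx₀⟩ := hcon
  set A' : ℝ := A * Real.exp (lam * R) with hA'
  have hA'pos : 0 < A' := by positivity
  set u : E2 → ℝ := fun x => f x - (A' * Real.exp (-(lam * ‖x‖)) + B) with hu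
  have hu0 : 0 < u x₀ := by simp only [hu]; linarith
  -- far away, u < u x₀
  have hfar : ∃ ρ₁ : ℝ, ∀ x : E2, ρ₁ ≤ ‖x‖ → u x < u x₀ := by
    have hev : ∀ᶠ x in comap (fun x : E2 => ‖x‖) atTop, f x ∈ Metric.ball (0:ℝ) (u x₀) :=
      hlim (Metric.ball_mem_nhds 0 hu0)
    rw [eventually_comap] at hev
    rw [eventually_atTop] at hev
    obtain ⟨ρ₁, hρ₁⟩ := hev
    refine ⟨ρ₁, fun x hx => ?_⟩
    have hfx : |f x| < u x₀ := by
      have := hρ₁ ‖x‖ hx x rfl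
      simpa [Real.dist_eq] using this
    have h1 : u x ≤ f x := by
      simp only [hu]
      have : 0 ≤ A' * Real.exp (-(lam * ‖x‖)) := by positivity
      linarith
    calc u x ≤ f x := h1
    _ ≤ |f x| := le_abs_self _
    _ < u x₀ := hfx
  obtain ⟨ρ₁, hρ₁⟩ := hfar
  set ρ : ℝ := max ρ₁ (max ‖x₀‖ R) with hρ
  set S : Set E2 := Metric.closedBall 0 ρ ∩ {x | R ≤ ‖x‖} with hS
  have hScpt : IsCompact S :=
    (isCompact_closedBall 0 ρ).inter_right (isClosed_le continuous_const continuous_norm)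
  have hx₀S : x₀ ∈ S := by
    constructor
    · rw [Metric.mem_closedBall, dist_zero_right]
      exact le_max_of_le_right (le_max_left _ _)
    · exact hx₀R
  have hsub : S ⊆ {x : E2 | R₀ ≤ ‖x‖} := fun x hx => le_trans hR hx.2
  have hucont : ContinuousOn u S := by
    apply ContinuousOn.sub
    · exact (hC2.continuousOn.mono hsub)
    · apply Continuous.continuousOn
      have : Continuous fun x : E2 => A' * Real.exp (-(lam * ‖x‖)) :=
        continuous_const.mul ((continuous_const.mul continuous_norm).neg.rexp)
      exact this.add continuous_const
  obtain ⟨x₁, hx₁S, hx₁max⟩ := hScpt.exists_isMaxOn ⟨x₀, hx₀S⟩ hucont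
  have hu₁ : 0 < u x₁ := lt_of_lt_of_le hu0 (hx₁max hx₀S)
  have hx₁ρ₁ : ‖x₁‖ < ρ₁ := by
    by_contra hge
    push_neg at hge
    exact absurd (lt_of_lt_of_le (hρ₁ x₁ hge) (hx₁max hx₀S)) (lt_irrefl _)
  have hx₁Rle : R ≤ ‖x₁‖ := hx₁S.2
  have hx₁R : R < ‖x₁‖ := by
    rcases lt_or_eq_of_le hx₁Rle with h | h
    · exact h
    · exfalso
      have hfx₁ : f x₁ ≤ A := hbound x₁ hx₁Rle
      have hval : A' * Real.exp (-(lam * ‖x₁‖)) = A := by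
        rw [← h, hA', mul_assoc, ← Real.exp_add]
        simp
      have : u x₁ ≤ -B := by
        simp only [hu]
        rw [hval]
        linarith
      linarith
  have hx₁ρ : ‖x₁‖ < ρ := lt_of_lt_of_le hx₁ρ₁ (le_max_left _ _)
  -- local max
  have hlocmax : IsLocalMax u x₁ := by
    have hgoal : ∀ᶠ y in nhds x₁, u y ≤ u x₁ := by
      rw [Metric.eventually_nhds_iff]
      refine ⟨min (ρ - ‖x₁‖) (‖x₁‖ - R), by simp [hx₁ρ, hx₁R, sub_pos], fun y hy => ?_⟩
      apply hx₁max
      constructor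
      · rw [Metric.mem_closedBall, dist_zero_right]
        have : ‖y‖ ≤ ‖x₁‖ + dist y x₁ := by
          rw [dist_eq_norm]
          calc ‖y‖ = ‖x₁ + (y - x₁)‖ := by congr 1; abel
          _ ≤ ‖x₁‖ + ‖y - x₁‖ := norm_add_le _ _
        have h2 : dist y x₁ < ρ - ‖x₁‖ := lt_of_lt_of_le hy (min_le_left _ _)
        linarith
      · show R ≤ ‖y‖
        have : ‖x₁‖ ≤ ‖y‖ + dist y x₁ := by
          rw [dist_eq_norm]
          calc ‖x₁‖ = ‖y + (x₁ - y)‖ := by congr 1; abel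
          _ ≤ ‖y‖ + ‖x₁ - y‖ := norm_add_le _ _
          _ = ‖y‖ + ‖y - x₁‖ := by rw [norm_sub_rev]
        have h2 : dist y x₁ < ‖x₁‖ - R := lt_of_lt_of_le hy (min_le_right _ _)
        linarith
    exact hgoal
  -- f is C² at x₁
  have hx₁ne : x₁ ≠ 0 := by
    intro h0
    rw [h0] at hx₁R
    simp at hx₁R
    linarith
  have hopen : IsOpen {x : E2 | R₀ < ‖x‖} := isOpen_lt continuous_const continuous_norm
  have hx₁mem : x₁ ∈ {x : E2 | R₀ < ‖x‖} := lt_of_le_of_lt hR hx₁R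
  have hC2' : ContDiffOn ℝ 2 f {x : E2 | R₀ < ‖x‖} := hC2.mono fun z hz => le_of_lt (Set.mem_setOf_eq ▸ hz)
  have hCA : ContDiffAt ℝ 2 f x₁ := hC2'.contDiffAt (hopen.mem_nhds hx₁mem)
  -- per-coordinate comparison
  have hkey : ∀ i : Fin 2,
      deriv (deriv (fun t : ℝ => f (x₁ + t • EuclideanSpace.single i (1:ℝ)))) 0 ≤
      deriv (deriv (fun t : ℝ =>
        A' * Real.exp (-(lam * ‖x₁ + t • EuclideanSpace.single i (1:ℝ)‖)) + B)) 0 := by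
    intro i
    set e : E2 := EuclideanSpace.single i (1:ℝ) with he
    have hline : ContDiff ℝ 2 (fun t : ℝ => x₁ + t • e) :=
      contDiff_const.add (contDiff_id.smul contDiff_const)
    have hF : ContDiffAt ℝ 2 (fun t : ℝ => f (x₁ + t • e)) 0 := slice_contDiffAt e hCA
    have hnorm : ContDiffAt ℝ 2 (fun t : ℝ => ‖x₁ + t • e‖) 0 := by
      have h0 : ContDiffAt ℝ 2 (Norm.norm : E2 → ℝ) ((fun t : ℝ => x₁ + t • e) 0) := by
        apply contDiffAt_norm ℝ
        simpa using hx₁ne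
      exact h0.comp 0 hline.contDiffAt
    have hG : ContDiffAt ℝ 2 (fun t : ℝ =>
        A' * Real.exp (-(lam * ‖x₁ + t • e‖)) + B) 0 := by
      exact ((contDiffAt_const.mul ((contDiffAt_const.mul hnorm).neg.exp)).add contDiffAt_const)
    have hmax_slice : IsLocalMax (fun t : ℝ => u (x₁ + t • e)) 0 := by
      have htend : Tendsto (fun t : ℝ => x₁ + t • e) (nhds 0) (nhds x₁) := by
        have := (line_hasDerivAt x₁ e 0).continuousAt.tendsto
        simpa using this
      have hev := htend.eventually hlocmax
      refine hev.mono fun t ht => ?_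
      simpa using ht
    have hsub2 := second_deriv_test
      (show ContDiffAt ℝ 2 (fun t : ℝ => u (x₁ + t • e)) 0 from hF.sub hG) hmax_slice
    have hsplit : deriv (deriv (fun t : ℝ => u (x₁ + t • e))) 0
        = deriv (deriv (fun t : ℝ => f (x₁ + t • e))) 0
          - deriv (deriv (fun t : ℝ => A' * Real.exp (-(lam * ‖x₁ + t • e‖)) + B)) 0 :=
      deriv2_sub hF hG (ev_diff hF) (ev_diff hG) (deriv_diffAt hF) (deriv_diffAt hG)
    rw [hsplit] at hsub2
    linarith
  -- sum up
  have hlap : lap2 f x₁ ≤ A' * Real.exp (-(lam * ‖x₁‖)) * (lam^2 - lam / ‖x₁‖) := by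
    rw [lap2_eq hCA, ← barrier_sum A' B lam x₁ hx₁ne]
    exact Finset.sum_le_sum fun i _ => hkey i
  have hE : 0 < A' * Real.exp (-(lam * ‖x₁‖)) := by positivity
  have hlow : f x₁ - B ≤ lap2 f x₁ := hpde x₁ hx₁Rle
  have hux₁ : f x₁ = u x₁ + A' * Real.exp (-(lam * ‖x₁‖)) + B := by simp only [hu]; ring
  have hr₁pos : 0 < ‖x₁‖ := norm_pos_iff.mpr hx₁ne
  have hdiv : 0 < lam / ‖x₁‖ := by positivity
  have hcoef : lam^2 - lam / ‖x₁‖ - 1 < 0 := by nlinarith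
  have hprod := mul_neg_of_pos_of_neg hE hcoef
  nlinarith [hprod]

lemma lap2_neg (f : E2 → ℝ) (x : E2) : lap2 (fun y => -(f y)) x = -(lap2 f x) := by
  unfold lap2
  rw [← Finset.sum_neg_distrib]
  refine Finset.sum_congr rfl fun i _ => ?_
  have h : iteratedFDeriv ℝ 2 (-f) x = -iteratedFDeriv ℝ 2 f x :=
    iteratedFDeriv_neg_apply (𝕜 := ℝ)
  have h2 : (fun y => -(f y)) = -f := rfl
  rw [h2, h]
  rfl

set_option maxHeartbeats 2000000 in
/-- Conclusion of the iteration: a decaying solution of the exterior problem with quadratic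
error decays at any rate `e^{−(1−ε)|x|}` with `ε ∈ (0,1)`. -/
theorem stmt_5 (R₀ : ℝ) (hR₀ : 1 ≤ R₀) (v : EuclideanSpace ℝ (Fin 2) → ℝ)
    (hC2 : ContDiffOn ℝ 2 v {x | R₀ ≤ ‖x‖})
    (hlim : Tendsto v (comap (fun x : EuclideanSpace ℝ (Fin 2) => ‖x‖) atTop) (nhds 0))
    (C₁ : ℝ) (hC₁ : 0 < C₁)
    (hquad : ∀ R, R₀ ≤ R → ∀ x, R ≤ ‖x‖ →
      |lap2 v x - v x| ≤ C₁ * (sSup ((fun y => |v y|) '' {y | R ≤ ‖y‖})) ^ 2) :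
    ∀ ε, 0 < ε → ε < 1 →
      ∃ C > (0:ℝ), ∀ x, R₀ ≤ ‖x‖ → |v x| ≤ C * Real.exp (-(1 - ε) * ‖x‖) := by
  set M : ℝ → ℝ := fun R => sSup ((fun y => |v y|) '' {y | R ≤ ‖y‖}) with hM
  -- nonemptiness
  have hpt : ∀ R : ℝ, ∃ y : E2, R ≤ ‖y‖ := by
    intro R
    refine ⟨EuclideanSpace.single 0 (max R 1), ?_⟩
    rw [EuclideanSpace.norm_single]
    rw [Real.norm_eq_abs, abs_of_pos (lt_of_lt_of_le one_pos (le_max_right _ _))]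
    exact le_max_left _ _
  have hne : ∀ R : ℝ, ((fun y => |v y|) '' {y : E2 | R ≤ ‖y‖}).Nonempty := by
    intro R
    obtain ⟨y, hy⟩ := hpt R
    exact ⟨|v y|, y, hy, rfl⟩
  -- global bound
  have hglob : ∃ K₀, ∀ x : E2, R₀ ≤ ‖x‖ → |v x| ≤ K₀ := by
    have hev : ∀ᶠ x in comap (fun x : E2 => ‖x‖) atTop, v x ∈ Metric.ball (0:ℝ) 1 :=
      hlim (Metric.ball_mem_nhds 0 one_pos)
    rw [eventually_comap, eventually_atTop] at hev
    obtain ⟨ρ, hρ⟩ := hev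
    have hann : IsCompact (Metric.closedBall (0:E2) ρ ∩ {x | R₀ ≤ ‖x‖}) :=
      (isCompact_closedBall 0 ρ).inter_right (isClosed_le continuous_const continuous_norm)
    obtain ⟨K₁, hK₁⟩ := hann.exists_bound_of_continuousOn
      (hC2.continuousOn.mono fun x hx => hx.2)
    refine ⟨max K₁ 1, fun x hx => ?_⟩
    rcases le_or_gt ρ ‖x‖ with h | h
    · have := hρ ‖x‖ h x rfl
      rw [Metric.mem_ball, Real.dist_eq, sub_zero] at this
      exact le_trans this.le (le_max_right _ _)
    · have hmem : x ∈ Metric.closedBall (0:E2) ρ ∩ {x | R₀ ≤ ‖x‖} := by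
        constructor
        · rw [Metric.mem_closedBall, dist_zero_right]; exact h.le
        · exact hx
      have := hK₁ x hmem
      rw [Real.norm_eq_abs] at this
      exact le_trans this (le_max_left _ _)
  obtain ⟨K₀, hK₀⟩ := hglob
  have hbdd : ∀ R, R₀ ≤ R → BddAbove ((fun y => |v y|) '' {y : E2 | R ≤ ‖y‖}) := by
    intro R hR
    refine ⟨K₀, fun z hz => ?_⟩
    obtain ⟨y, hy, rfl⟩ := hz
    exact hK₀ y (le_trans hR hy)
  have hMle : ∀ R, R₀ ≤ R → ∀ x : E2, R ≤ ‖x‖ → |v x| ≤ M R := by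
    intro R hR x hx
    exact le_csSup (hbdd R hR) ⟨x, hx, rfl⟩
  have hM0 : ∀ R, R₀ ≤ R → 0 ≤ M R := by
    intro R hR
    obtain ⟨y, hy⟩ := hpt R
    exact le_trans (abs_nonneg _) (hMle R hR y hy)
  have hMub : ∀ R, ∀ K : ℝ, (∀ x : E2, R ≤ ‖x‖ → |v x| ≤ K) → M R ≤ K := by
    intro R K hK
    refine csSup_le (hne R) ?_
    rintro z ⟨y, hy, rfl⟩
    exact hK y hy
  have hManti : ∀ R R', R₀ ≤ R → R ≤ R' → M R' ≤ M R := by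
    intro R R' hR hRR'
    exact hMub R' (M R) fun x hx => hMle R hR x (le_trans hRR' hx)
  have hMsmall : ∀ δ : ℝ, 0 < δ → ∃ R, R₀ ≤ R ∧ M R ≤ δ := by
    intro δ hδ
    have hev : ∀ᶠ x in comap (fun x : E2 => ‖x‖) atTop, v x ∈ Metric.ball (0:ℝ) δ :=
      hlim (Metric.ball_mem_nhds 0 hδ)
    rw [eventually_comap, eventually_atTop] at hev
    obtain ⟨ρ, hρ⟩ := hev
    refine ⟨max R₀ ρ, le_max_left _ _, hMub _ δ fun x hx => ?_⟩
    have := hρ ‖x‖ (le_trans (le_max_right _ _) hx) x rfl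
    rw [Metric.mem_ball, Real.dist_eq, sub_zero] at this
    exact this.le
  -- two-sided maximum principle
  have hMP : ∀ lam : ℝ, 0 < lam → lam < 1 → ∀ R, R₀ ≤ R → ∀ x : E2, R ≤ ‖x‖ →
      |v x| ≤ M R * Real.exp (lam * R) * Real.exp (-(lam * ‖x‖)) + C₁ * (M R)^2 := by
    intro lam hlam0 hlam1 R hR x hx
    rcases eq_or_lt_of_le (hM0 R hR) with hMR0 | hMRpos
    · have h1 : |v x| ≤ M R := hMle R hR x hx
      rw [← hMR0] at h1 ⊢
      have : (0:ℝ) * Real.exp (lam * R) * Real.exp (-(lam * ‖x‖)) + C₁ * 0^2 = 0 := by ring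
      rw [this]
      exact h1
    · set B : ℝ := C₁ * (M R)^2 with hB
      have hBpos : 0 < B := by positivity
      have hquadR := hquad R hR
      have h1 : ∀ y : E2, R ≤ ‖y‖ → v y ≤ M R * Real.exp (lam * R) * Real.exp (-(lam * ‖y‖)) + B := by
        apply maxprin R₀ hR₀ v hC2 hlim hR hlam0 hlam1 hMRpos hBpos
        · intro y hy
          exact le_trans (le_abs_self _) (hMle R hR y hy)
        · intro y hy
          have h2 := hquadR y hy
          have h3 : |lap2 v y - v y| ≤ B := h2
          have := abs_le.1 h3
          linarith [this.1]
      have h2 : ∀ y : E2, R ≤ ‖y‖ → -(v y) ≤ M R * Real.exp (lam * R) * Real.exp (-(lam * ‖y‖)) + B := by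
        apply maxprin R₀ hR₀ (fun y => -(v y)) hC2.neg ?_ hR hlam0 hlam1 hMRpos hBpos
        · intro y hy
          exact le_trans (neg_le_abs _) (hMle R hR y hy)
        · intro y hy
          rw [lap2_neg]
          have h3 : |lap2 v y - v y| ≤ B := hquadR y hy
          have := abs_le.1 h3
          linarith [this.2]
        · have := hlim.neg
          simpa using this
      exact abs_le.2 ⟨by linarith [h2 x hx], h1 x hx⟩
  -- initial exponential decay
  have hinit : ∃ μ K : ℝ, 0 < μ ∧ 0 < K ∧
      ∀ x : E2, R₀ ≤ ‖x‖ → |v x| ≤ K * Real.exp (-(μ * ‖x‖)) := by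
    obtain ⟨R₁, hR₁, hMR₁⟩ := hMsmall (1/(2*C₁)) (by positivity)
    set T : ℝ := 2 * Real.log 4 with hTdef
    have hlog4 : 0 < Real.log 4 := Real.log_pos (by norm_num)
    have hT : 0 < T := by positivity
    have hl : 0 < Real.log (4/3) := Real.log_pos (by norm_num)
    have hstep : ∀ R, R₁ ≤ R → M (R + T) ≤ 3/4 * M R := by
      intro R hRR₁
      have hRR₀ : R₀ ≤ R := le_trans hR₁ hRR₁
      apply hMub
      intro x hx
      have hx' : R ≤ ‖x‖ := by linarith
      have h1 := hMP (1/2) (by norm_num) (by norm_num) R hRR₀ x hx'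
      have hMR : M R ≤ 1/(2*C₁) := le_trans (hManti R₁ R hR₁ hRR₁) hMR₁
      have hM0R : 0 ≤ M R := hM0 R hRR₀
      have hMR2 : M R * (2*C₁) ≤ 1 := (le_div_iff₀ (by positivity)).1 hMR
      have hquad' : C₁ * (M R)^2 ≤ M R / 2 := by
        nlinarith [mul_le_mul_of_nonneg_left hMR2 hM0R]
      have hexp : Real.exp ((1/2 : ℝ) * R) * Real.exp (-((1/2 : ℝ) * ‖x‖)) ≤ 1/4 := by
        rw [← Real.exp_add]
        have harg : (1/2 : ℝ) * R + -((1/2:ℝ)*‖x‖) ≤ -Real.log 4 := by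
          rw [hTdef] at hx
          linarith
        calc Real.exp ((1/2:ℝ) * R + -((1/2:ℝ)*‖x‖)) ≤ Real.exp (-Real.log 4) :=
              Real.exp_le_exp.2 harg
        _ = 1/4 := by
              rw [Real.exp_neg, Real.exp_log (by norm_num : (0:ℝ) < 4)]
              norm_num
      have hterm : M R * Real.exp ((1/2:ℝ)*R) * Real.exp (-((1/2:ℝ)*‖x‖)) ≤ M R * (1/4) := by
        rw [mul_assoc]
        exact mul_le_mul_of_nonneg_left hexp hM0R
      calc |v x| ≤ M R * Real.exp ((1/2:ℝ)*R) * Real.exp (-((1/2:ℝ)*‖x‖)) + C₁ * (M R)^2 := h1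
      _ ≤ M R * (1/4) + M R / 2 := by linarith
      _ = 3/4 * M R := by ring
    have hiter : ∀ n : ℕ, M (R₁ + n * T) ≤ (3/4)^n * M R₁ := by
      intro n
      induction n with
      | zero => simp
      | succ n ih =>
        have h1 : R₁ + ((n:ℕ)+1 : ℕ) * T = (R₁ + n * T) + T := by push_cast; ring
        rw [h1]
        have h2 := hstep (R₁ + n*T) (le_add_of_nonneg_right (by positivity))
        calc M ((R₁ + n*T) + T) ≤ 3/4 * M (R₁ + n*T) := h2
        _ ≤ 3/4 * ((3/4)^n * M R₁) := by
              have := mul_le_mul_of_nonneg_left ih (by norm_num : (0:ℝ) ≤ 3/4)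
              linarith
        _ = (3/4)^((n:ℕ)+1) * M R₁ := by ring
    set μ₀ : ℝ := Real.log (4/3) / T with hμ₀def
    have hμ₀ : 0 < μ₀ := div_pos hl hT
    have hMR₀0 : 0 ≤ M R₀ := hM0 R₀ le_rfl
    have hMR₁0 : 0 ≤ M R₁ := hM0 R₁ hR₁
    set K : ℝ := (M R₀ + M R₁ + 1) * Real.exp (Real.log (4/3) + μ₀ * R₁) with hKdef
    have hKpos : 0 < K := by
      apply mul_pos
      · linarith
      · exact Real.exp_pos _
    refine ⟨μ₀, K, hμ₀, hKpos, fun x hx => ?_⟩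
    rcases le_or_gt R₁ ‖x‖ with hcase | hcase
    · set n : ℕ := ⌊(‖x‖ - R₁)/T⌋₊ with hn
      have hnn : (0:ℝ) ≤ (‖x‖ - R₁)/T := div_nonneg (by linarith) hT.le
      have hfl : (n : ℝ) ≤ (‖x‖ - R₁)/T := Nat.floor_le hnn
      have hfl2 : (‖x‖ - R₁)/T < n + 1 := Nat.lt_floor_add_one _
      have hle : R₁ + n * T ≤ ‖x‖ := by
        have h := mul_le_mul_of_nonneg_right hfl hT.le
        rw [div_mul_cancel₀ _ hT.ne'] at h
        linarith
      have h1 : |v x| ≤ M (R₁ + n*T) :=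
        hMle (R₁+n*T) (le_trans hR₁ (le_add_of_nonneg_right (by positivity))) x hle
      have h2 := hiter n
      have hb34 : ((3:ℝ)/4)^n = Real.exp (-((n:ℝ) * Real.log (4/3))) := by
        rw [show -((n:ℝ)*Real.log (4/3)) = (n:ℝ) * (-Real.log (4/3)) by ring,
          Real.exp_nat_mul, Real.exp_neg, Real.exp_log (by norm_num : (0:ℝ) < 4/3)]
        norm_num
      have h5 : (‖x‖-R₁)/T * Real.log (4/3) = μ₀*‖x‖ - μ₀*R₁ := by
        rw [hμ₀def]
        field_simp
      have h3 : ((3:ℝ)/4)^n ≤ Real.exp (Real.log (4/3) + μ₀*R₁ + -(μ₀*‖x‖)) := by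
        rw [hb34]
        apply Real.exp_le_exp.2
        have h4 : ((‖x‖-R₁)/T - 1) * Real.log (4/3) ≤ (n:ℝ) * Real.log (4/3) :=
          mul_le_mul_of_nonneg_right (by linarith) hl.le
        nlinarith [h4, h5]
      have h6 : |v x| ≤ M R₁ * Real.exp (Real.log (4/3) + μ₀*R₁ + -(μ₀*‖x‖)) := by
        calc |v x| ≤ (3/4)^n * M R₁ := le_trans h1 h2
        _ = M R₁ * (3/4)^n := by ring
        _ ≤ M R₁ * Real.exp (Real.log (4/3) + μ₀*R₁ + -(μ₀*‖x‖)) :=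
            mul_le_mul_of_nonneg_left h3 hMR₁0
      have h7 : K * Real.exp (-(μ₀ * ‖x‖))
          = (M R₀ + M R₁ + 1) * Real.exp (Real.log (4/3) + μ₀*R₁ + -(μ₀*‖x‖)) := by
        rw [hKdef, mul_assoc, ← Real.exp_add]
      rw [h7]
      have h8 : M R₁ * Real.exp (Real.log (4/3) + μ₀*R₁ + -(μ₀*‖x‖))
          ≤ (M R₀ + M R₁ + 1) * Real.exp (Real.log (4/3) + μ₀*R₁ + -(μ₀*‖x‖)) :=
        mul_le_mul_of_nonneg_right (by linarith) (Real.exp_pos _).le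
      linarith
    · have h1 : |v x| ≤ M R₀ := hMle R₀ le_rfl x hx
      have hcoef : (1:ℝ) ≤ Real.exp (Real.log (4/3) + μ₀*R₁ + -(μ₀*‖x‖)) := by
        apply Real.one_le_exp
        nlinarith [mul_nonneg hμ₀.le (sub_nonneg.2 hcase.le)]
      have h7 : K * Real.exp (-(μ₀ * ‖x‖))
          = (M R₀ + M R₁ + 1) * Real.exp (Real.log (4/3) + μ₀*R₁ + -(μ₀*‖x‖)) := by
        rw [hKdef, mul_assoc, ← Real.exp_add]
      rw [h7]
      nlinarith [hcoef]
  intro ε hε0 hε1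
  set lam : ℝ := 1 - ε/2 with hlamdef
  have hlam0 : 0 < lam := by rw [hlamdef]; linarith
  have hlam1 : lam < 1 := by rw [hlamdef]; linarith
  -- improvement step
  have himp : ∀ μ K : ℝ, 0 < μ → μ ≤ lam → 0 < K →
      (∀ x : E2, R₀ ≤ ‖x‖ → |v x| ≤ K * Real.exp (-(μ * ‖x‖))) →
      ∃ K' : ℝ, 0 < K' ∧ ∀ x : E2, R₀ ≤ ‖x‖ →
        |v x| ≤ K' * Real.exp (-((2*lam*μ/(lam+μ)) * ‖x‖)) := by
    intro μ K hμ hμlam hK hbnd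
    have hlamμ : 0 < lam + μ := by linarith
    set ν : ℝ := 2*lam*μ/(lam+μ) with hνdef
    have hν : 0 < ν := by positivity
    set θ : ℝ := lam/(lam+μ) with hθdef
    have hθ0 : 0 < θ := by positivity
    have hθ1 : θ < 1 := by rw [hθdef]; rw [div_lt_one hlamμ]; linarith
    have hPM : ∀ R, R₀ ≤ R → M R ≤ K * Real.exp (-(μ * R)) := by
      intro R hR
      apply hMub
      intro x hx
      refine le_trans (hbnd x (le_trans hR hx)) ?_
      apply mul_le_mul_of_nonneg_left _ hK.le
      apply Real.exp_le_exp.2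
      have := mul_le_mul_of_nonneg_left hx hμ.le
      linarith
    set K' : ℝ := K + C₁*K^2 + (M R₀ + 1) * Real.exp (ν * (R₀/θ)) with hK'def
    have hMR₀0 : 0 ≤ M R₀ := hM0 R₀ le_rfl
    have hK'pos : 0 < K' := by positivity
    refine ⟨K', hK'pos, fun x hx => ?_⟩
    have hr0 : 0 < ‖x‖ := lt_of_lt_of_le (by linarith) hx
    rcases le_or_gt R₀ (θ * ‖x‖) with hcase | hcase
    · set R : ℝ := θ * ‖x‖ with hRdef
      have hRr : R ≤ ‖x‖ := by
        rw [hRdef]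
        nlinarith
      have key := hMP lam hlam0 hlam1 R hcase x hRr
      have hMRb := hPM R hcase
      have hM0R : 0 ≤ M R := hM0 R hcase
      have hX : 0 < Real.exp (lam * R) * Real.exp (-(lam * ‖x‖)) := by positivity
      have hterm1 : M R * Real.exp (lam * R) * Real.exp (-(lam * ‖x‖))
          ≤ K * Real.exp (-(ν * ‖x‖)) := by
        have h1 : M R * Real.exp (lam * R) * Real.exp (-(lam * ‖x‖))
            ≤ (K * Real.exp (-(μ * R))) * (Real.exp (lam * R) * Real.exp (-(lam * ‖x‖))) := by
          rw [mul_assoc]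
          exact mul_le_mul_of_nonneg_right hMRb hX.le
        have h2 : (K * Real.exp (-(μ * R))) * (Real.exp (lam * R) * Real.exp (-(lam * ‖x‖)))
            = K * Real.exp (-(μ * R) + (lam * R + -(lam * ‖x‖))) := by
          rw [Real.exp_add, Real.exp_add]
          ring
        have h3 : -(μ * R) + (lam * R + -(lam * ‖x‖)) = -(ν * ‖x‖) := by
          rw [hRdef, hθdef, hνdef]
          field_simp
          ring
        rw [h2, h3] at h1
        exact h1
      have hterm2 : C₁ * (M R)^2 ≤ C₁ * K^2 * Real.exp (-(ν * ‖x‖)) := by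
        have h1 : (M R)^2 ≤ (K * Real.exp (-(μ * R)))^2 := pow_le_pow_left₀ hM0R hMRb 2
        have h2 : (K * Real.exp (-(μ * R)))^2 = K^2 * Real.exp (-(μ*R) + -(μ*R)) := by
          rw [Real.exp_add]
          ring
        have h3 : -(μ*R) + -(μ*R) = -(ν * ‖x‖) := by
          rw [hRdef, hθdef, hνdef]
          field_simp
          ring
        rw [h2, h3] at h1
        nlinarith [Real.exp_pos (-(ν * ‖x‖))]
      have hlast : 0 ≤ (M R₀ + 1) * Real.exp (ν * (R₀/θ)) * Real.exp (-(ν * ‖x‖)) := by positivity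
      calc |v x| ≤ M R * Real.exp (lam * R) * Real.exp (-(lam * ‖x‖)) + C₁ * (M R)^2 := key
      _ ≤ K * Real.exp (-(ν * ‖x‖)) + C₁ * K^2 * Real.exp (-(ν * ‖x‖)) := by linarith
      _ ≤ K' * Real.exp (-(ν * ‖x‖)) := by
          rw [hK'def]
          nlinarith [hlast]
    · have hrsmall : ‖x‖ < R₀/θ := by
        rw [lt_div_iff₀ hθ0]
        nlinarith
      have h1 : |v x| ≤ M R₀ := hMle R₀ le_rfl x hx
      have hcoef : (1:ℝ) ≤ Real.exp (ν * (R₀/θ)) * Real.exp (-(ν * ‖x‖)) := by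
        rw [← Real.exp_add]
        apply Real.one_le_exp
        nlinarith [mul_nonneg hν.le (sub_nonneg.2 hrsmall.le)]
      have h2 : M R₀ ≤ (M R₀ + 1) * (Real.exp (ν * (R₀/θ)) * Real.exp (-(ν * ‖x‖))) := by
        nlinarith [hcoef]
      have h3 : 0 < Real.exp (-(ν * ‖x‖)) := Real.exp_pos _
      calc |v x| ≤ M R₀ := h1
      _ ≤ (M R₀ + 1) * (Real.exp (ν * (R₀/θ)) * Real.exp (-(ν * ‖x‖))) := h2
      _ ≤ K' * Real.exp (-(ν * ‖x‖)) := by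
          rw [hK'def]
          nlinarith [mul_pos hK h3, mul_pos (mul_pos hC₁ (pow_pos hK 2)) h3]
  -- iterate the improvement
  obtain ⟨μ₀, K₀', hμ₀, hK₀', hP₀⟩ := hinit
  set μ₁ : ℝ := min μ₀ lam with hμ₁def
  have hμ₁0 : 0 < μ₁ := lt_min hμ₀ hlam0
  have hμ₁lam : μ₁ ≤ lam := min_le_right _ _
  have hP₁ : ∀ x : E2, R₀ ≤ ‖x‖ → |v x| ≤ K₀' * Real.exp (-(μ₁ * ‖x‖)) := by
    intro x hx
    refine le_trans (hP₀ x hx) ?_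
    apply mul_le_mul_of_nonneg_left _ hK₀'.le
    apply Real.exp_le_exp.2
    have hr0 : 0 < ‖x‖ := lt_of_lt_of_le (by linarith) hx
    have : μ₁ ≤ μ₀ := min_le_left _ _
    nlinarith
  set q : ℝ := lam/(lam+μ₁) with hqdef
  have hlamμ₁ : 0 < lam + μ₁ := by linarith
  have hq0 : 0 < q := by positivity
  have hq1 : q < 1 := by rw [hqdef, div_lt_one hlamμ₁]; linarith
  have hind : ∀ n : ℕ, ∃ μ K : ℝ, 0 < K ∧ μ₁ ≤ μ ∧ μ ≤ lam ∧
      lam - μ ≤ q^n * (lam - μ₁) ∧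
      ∀ x : E2, R₀ ≤ ‖x‖ → |v x| ≤ K * Real.exp (-(μ * ‖x‖)) := by
    intro n
    induction n with
    | zero => exact ⟨μ₁, K₀', hK₀', le_rfl, hμ₁lam, by simp, hP₁⟩
    | succ n ih =>
      obtain ⟨μ, K, hK, hμ₁μ, hμlam, hgap, hbd⟩ := ih
      have hμpos : 0 < μ := lt_of_lt_of_le hμ₁0 hμ₁μ
      have hlamμ : 0 < lam + μ := by linarith
      obtain ⟨K', hK', hbd'⟩ := himp μ K hμpos hμlam hK hbd
      refine ⟨2*lam*μ/(lam+μ), K', hK', ?_, ?_, ?_, hbd'⟩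
      · rw [le_div_iff₀ hlamμ]
        nlinarith
      · rw [div_le_iff₀ hlamμ]
        nlinarith
      · have e1 : lam - 2*lam*μ/(lam+μ) = lam*(lam-μ)/(lam+μ) := by
          field_simp
          ring
        have e2 : lam*(lam-μ)/(lam+μ) ≤ lam*(lam-μ)/(lam+μ₁) := by
          apply div_le_div_of_nonneg_left ?_ hlamμ₁ ?_
          · nlinarith
          · linarith
        have e3 : lam*(lam-μ)/(lam+μ₁) = q * (lam-μ) := by
          rw [hqdef]
          ring
        have e4 : q * (lam - μ) ≤ q * (q^n * (lam - μ₁)) :=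
          mul_le_mul_of_nonneg_left hgap hq0.le
        calc lam - 2*lam*μ/(lam+μ) = lam*(lam-μ)/(lam+μ) := e1
        _ ≤ lam*(lam-μ)/(lam+μ₁) := e2
        _ = q * (lam-μ) := e3
        _ ≤ q * (q^n * (lam - μ₁)) := e4
        _ = q^(n+1) * (lam - μ₁) := by ring
  have hgap0 : 0 ≤ lam - μ₁ := by linarith
  obtain ⟨n, hn⟩ := exists_pow_lt_of_lt_one
    (show (0:ℝ) < (ε/2)/(lam - μ₁ + 1) by positivity) hq1
  obtain ⟨μ, K, hK, hμ₁μ, hμlam, hgap, hbd⟩ := hind n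
  have hqn0 : 0 ≤ q^n := by positivity
  have hsmall : q^n * (lam - μ₁) ≤ ε/2 := by
    have h1 : q^n * (lam - μ₁ + 1) < (ε/2)/(lam - μ₁ + 1) * (lam - μ₁ + 1) :=
      mul_lt_mul_of_pos_right hn (by linarith)
    rw [div_mul_cancel₀ _ (ne_of_gt (by linarith : (0:ℝ) < lam - μ₁ + 1))] at h1
    nlinarith
  have hμfinal : 1 - ε ≤ μ := by
    have h : lam = 1 - ε/2 := hlamdef
    have h2 : lam - μ ≤ ε/2 := le_trans hgap hsmall
    linarith
  refine ⟨K, hK, fun x hx => ?_⟩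
  refine le_trans (hbd x hx) ?_
  apply mul_le_mul_of_nonneg_left _ hK.le
  apply Real.exp_le_exp.2
  have hr0 : 0 < ‖x‖ := lt_of_lt_of_le (by linarith) hx
  have h1 : (1-ε) * ‖x‖ ≤ μ * ‖x‖ := mul_le_mul_of_nonneg_right hμfinal hr0.le
  linarith
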